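/- arXiv:1206.0634 — 3 statements merged into one kernel-verified Lean document; each statement's English description precedes it below -/
import Mathlib

section
/- Let p be an odd prime, q a power of p, and K a finite field with q² elements. Then the set {(x, y) ∈ K × K : x·y^q + y·x^q = 1} has exactly q·(q² − 1) elements. -/
open Polynomial Finset

section Aux
variable {K : Type*} [Field K] [Fintype K] (p q : ℕ)

theorem fiber_count (hp : p.Prime) (n : ℕ) (hn : 0 < n) (hqn : q = p ^ n)
    [CharP K p] (hK : Fintype.card K = q ^ 2) (x : K) (hx : x ≠ 0) :
    Nat.card {y : K // x * y ^ q + y * x ^ q = 1} = q := by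
  classical
  haveI : Fact p.Prime := ⟨hp⟩
  have hq1 : 1 < q := by
    rw [hqn]; exact Nat.one_lt_pow hn.ne' hp.one_lt
  have hfrob : ∀ a b : K, (a + b) ^ q = a ^ q + b ^ q := by
    intro a b; rw [hqn]; exact add_pow_char_pow a b p n
  have hpow : ∀ a : K, (a ^ q) ^ q = a := by
    intro a; rw [← pow_mul, ← sq, ← hK, FiniteField.pow_card]
  let φ : K →+ K :=
    { toFun := fun y => x * y ^ q + x ^ q * y
      map_zero' := by simp [zero_pow (by omega : q ≠ 0)]
      map_add' := by intro a b; simp only [hfrob]; ring }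
  have hφ : ∀ y : K, φ y = x * y ^ q + x ^ q * y := fun _ => rfl
  -- kernel bound
  have hker_le : Nat.card φ.ker ≤ q := by
    by_contra h
    push_neg at h
    have hP0 : (C x * X ^ q + C (x ^ q) * X : K[X]) = 0 := by
      have hdeg : (C x * X ^ q + C (x ^ q) * X : K[X]).natDegree ≤ q := by
        refine natDegree_add_le_of_degree_le ?_ ?_
        · exact (natDegree_C_mul_le _ _).trans (by simp)
        · exact (natDegree_C_mul_le _ _).trans (by simp; omega)
      refine eq_zero_of_natDegree_lt_card_of_eval_eq_zero _ (f := fun y : φ.ker => (y : K))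
        Subtype.val_injective (fun y => ?_) ?_
      · have hy := y.2
        rw [AddMonoidHom.mem_ker, hφ] at hy
        simpa using hy
      · rw [← Nat.card_eq_fintype_card]; omega
    have := congrArg (fun P : K[X] => P.coeff 1) hP0
    simp only [coeff_add, coeff_C_mul, coeff_X_pow, coeff_X, coeff_zero,
      if_neg (by omega : ¬ 1 = q), mul_zero, zero_add, if_pos trivial, mul_one] at this
    exact hx (pow_eq_zero_iff (by omega : q ≠ 0) |>.mp this)
  -- range ⊆ {z | z ^ q = z}
  have hrangeFq : ∀ z ∈ φ.range, z ^ q = z := by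
    rintro z ⟨w, rfl⟩
    rw [hφ, hfrob, mul_pow, mul_pow, hpow, hpow]
    ring
  -- the Fq finset
  let F : Finset K := univ.filter (fun z => z ^ q = z)
  have hFmem : ∀ z : K, z ∈ F ↔ z ^ q = z := fun z => by
    simp only [F, mem_filter, mem_univ, true_and]
  have hF_le : F.card ≤ q := by
    by_contra h
    push_neg at h
    have hP0 : (X ^ q - X : K[X]) = 0 := by
      refine eq_zero_of_natDegree_lt_card_of_eval_eq_zero _ (f := fun y : ↥F => (y : K))
        Subtype.val_injective (fun y => ?_) ?_
      · have hy := (hFmem _).mp y.2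
        simp [sub_eq_zero, hy]
      · have hdeg : (X ^ q - X : K[X]).natDegree ≤ q := by
          refine (natDegree_sub_le _ _).trans ?_
          simp; omega
        rw [Fintype.card_coe]; omega
    have := congrArg (fun P : K[X] => P.coeff q) hP0
    simp only [coeff_sub, coeff_X_pow, if_pos trivial, coeff_X, coeff_zero,
      if_neg (by omega : ¬ q = 1), if_neg (by omega : ¬ 1 = q), sub_zero] at this
    exact (one_ne_zero (α := K)) this
  have hrange_le : Nat.card φ.range ≤ q := by
    have : (φ.range : Set K).toFinset ⊆ F := by
      intro z hz
      rw [Set.mem_toFinset] at hz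
      exact (hFmem z).mpr (hrangeFq z hz)
    calc Nat.card φ.range = ((φ.range : Set K)).ncard := rfl
      _ = (φ.range : Set K).toFinset.card := Set.ncard_eq_toFinset_card' _
      _ ≤ F.card := Finset.card_le_card this
      _ ≤ q := hF_le
  -- product
  have hprod : Nat.card φ.range * Nat.card φ.ker = q * q := by
    have h1 := AddSubgroup.card_eq_card_quotient_mul_card_addSubgroup φ.ker
    have h2 : Nat.card (K ⧸ φ.ker) = Nat.card φ.range :=
      Nat.card_congr (QuotientAddGroup.quotientKerEquivRange φ).toEquiv
    rw [h2] at h1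
    rw [← h1, Nat.card_eq_fintype_card, hK, sq]
  have hkerpos : 0 < Nat.card φ.ker := Nat.card_pos
  have hrangepos : 0 < Nat.card φ.range := Nat.card_pos
  have hker : Nat.card φ.ker = q := by nlinarith
  have hrange : Nat.card φ.range = q := by nlinarith
  -- 1 ∈ range
  have hone : ∃ y₀ : K, φ y₀ = 1 := by
    by_contra h
    push_neg at h
    have h1F : (1 : K) ∈ F := (hFmem 1).mpr (one_pow q)
    have h1nr : (1 : K) ∉ (φ.range : Set K).toFinset := by
      rw [Set.mem_toFinset]
      rintro ⟨w, hw⟩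
      exact h w hw
    have hsub : insert (1 : K) (φ.range : Set K).toFinset ⊆ F := by
      refine Finset.insert_subset h1F ?_
      intro z hz
      rw [Set.mem_toFinset] at hz
      exact (hFmem z).mpr (hrangeFq z hz)
    have hcard := Finset.card_le_card hsub
    rw [Finset.card_insert_of_notMem h1nr] at hcard
    have : (φ.range : Set K).toFinset.card = q := by
      rw [← Set.ncard_eq_toFinset_card']; exact hrange
    omega
  obtain ⟨y₀, hy₀⟩ := hone
  have key : Nat.card {y : K // x * y ^ q + y * x ^ q = 1} = Nat.card φ.ker := by
    apply Nat.card_congr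
    have hcond : ∀ y : K, (x * y ^ q + y * x ^ q = 1) ↔ φ y = 1 := by
      intro y; rw [hφ, mul_comm y (x ^ q)]
    refine ⟨fun y => ⟨y.1 - y₀, ?_⟩, fun z => ⟨z.1 + y₀, ?_⟩, ?_, ?_⟩
    · have hy := (hcond y.1).mp y.2
      simp [AddMonoidHom.mem_ker, map_sub, hy, hy₀]
    · have hz := z.2
      rw [AddMonoidHom.mem_ker] at hz
      rw [hcond]
      simp [map_add, hz, hy₀]
    · intro y; ext; simp
    · intro z; ext; simp
  rw [key, hker]
end Aux

/-- Let `q` be a power of an odd prime `p` and `K` a finite field with `q²` elements.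
Then the set `{(x,y) ∈ K × K : x·y^q + y·x^q = 1}` has exactly `q·(q² − 1)` elements. -/
theorem card_hermitian_sphere (p q : ℕ) (hp : p.Prime) (hp2 : p ≠ 2)
    (hq : ∃ n : ℕ, 0 < n ∧ q = p ^ n)
    (K : Type*) [Field K] [Fintype K] (hK : Fintype.card K = q ^ 2) :
    Nat.card {v : K × K // v.1 * v.2 ^ q + v.2 * v.1 ^ q = 1} = q * (q ^ 2 - 1) := by
  classical
  obtain ⟨n, hn, hqn⟩ := hq
  haveI : Fact p.Prime := ⟨hp⟩
  -- characteristic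
  haveI hrc : CharP K (ringChar K) := ringChar.charP K
  obtain ⟨m, hrprime, hm⟩ := FiniteField.card K (ringChar K)
  haveI : CharP K p := by
    have heq : ringChar K ^ (m : ℕ) = p ^ (2 * n) := by
      rw [← hm, hK, hqn, ← pow_mul, mul_comm]
    have hdvd : ringChar K ∣ p ^ (2 * n) := heq ▸ dvd_pow_self _ (by positivity : (m:ℕ) ≠ 0)
    have : ringChar K = p := by
      have := (Nat.Prime.dvd_of_dvd_pow hrprime hdvd)
      exact (Nat.prime_dvd_prime_iff_eq hrprime hp).mp this
    exact this ▸ hrc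
  have hq1 : 1 < q := by rw [hqn]; exact Nat.one_lt_pow hn.ne' hp.one_lt
  -- split by first coordinate
  have e : {v : K × K // v.1 * v.2 ^ q + v.2 * v.1 ^ q = 1} ≃
      Σ x : K, {y : K // x * y ^ q + y * x ^ q = 1} :=
    Equiv.subtypeProdEquivSigmaSubtype (fun a b : K => a * b ^ q + b * a ^ q = 1)
  rw [Nat.card_congr e, Nat.card_eq_fintype_card, Fintype.card_sigma]
  have h0 : Fintype.card {y : K // (0 : K) * y ^ q + y * (0 : K) ^ q = 1} = 0 := by
    rw [Fintype.card_eq_zero_iff]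
    refine ⟨fun y => ?_⟩
    have := y.2
    simp [zero_pow (by omega : q ≠ 0)] at this
  have hx : ∀ x : K, x ≠ 0 → Fintype.card {y : K // x * y ^ q + y * x ^ q = 1} = q := by
    intro x hx
    rw [← Nat.card_eq_fintype_card]
    exact fiber_count p q hp n hn hqn hK x hx
  rw [← Finset.sum_sdiff (Finset.subset_univ {(0 : K)})]
  rw [Finset.sum_congr rfl (fun x hxmem => hx x (by
    rw [Finset.mem_sdiff, Finset.mem_singleton] at hxmem; exact hxmem.2))]
  rw [Finset.sum_const, Finset.sum_singleton, h0, add_zero, smul_eq_mul]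
  rw [Finset.card_sdiff_of_subset (Finset.subset_univ _), Finset.card_singleton, Finset.card_univ, hK]
  rw [Nat.mul_comm]
end

section
/- Let p be an odd prime, q a power of p, and K a finite field with q² elements. Then the set of nonzero vectors (a, b, c) ∈ K³ satisfying −a·c^q − c·a^q + b^{q+1} = 0 has exactly (q³ + 1)(q² − 1) elements; equivalently, the Hermitian form ⟨(a,b,c),(a',b',c')⟩ = −a·(c')^q − c·(a')^q + b·(b')^q on K³ has exactly q³ + 1 isotropic lines (one-dimensional subspaces on which the form vanishes). -/
/-- The Hermitian form `⟨v,w⟩ = −v₁·w₃^q − v₃·w₁^q + v₂·w₂^q` on `K³`. -/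
def hermForm {K : Type*} [Field K] (q : ℕ) (v w : Fin 3 → K) : K :=
  -(v 0 * (w 2) ^ q) - v 2 * (w 0) ^ q + v 1 * (w 1) ^ q

set_option maxHeartbeats 2000000

open Polynomial Finset

/-- The number of roots in `K` of `X^q + c·X` is at most `q` (for `2 ≤ q`). -/
lemma card_root_le {K : Type*} [Field K] [Fintype K] (q : ℕ) (hq2 : 2 ≤ q) (c : K) :
    Nat.card {x : K // x ^ q + c * x = 0} ≤ q := by
  classical
  set f : K[X] := X ^ q + C c * X with hf
  have hfne : f ≠ 0 := by
    intro h
    have : f.coeff q = 0 := by rw [h]; simp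
    rw [hf] at this
    simp only [coeff_add, coeff_X_pow, if_pos rfl, coeff_C_mul, coeff_X] at this
    rw [if_neg (by omega : ¬(1 = q))] at this
    simp at this
  have hdeg : f.natDegree ≤ q := by
    apply le_trans (natDegree_add_le _ _)
    simp only [natDegree_X_pow, max_le_iff, le_refl, true_and]
    exact le_trans (natDegree_C_mul_le _ _) (by simp; omega)
  have key : ∀ x : K, x ^ q + c * x = 0 ↔ f.eval x = 0 := by
    intro x; rw [hf]; simp
  rw [Nat.card_congr (Equiv.subtypeEquivRight key)]
  have h2 : Nat.card {x : K // f.eval x = 0} ≤ f.roots.toFinset.card := by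
    rw [Nat.card_eq_fintype_card]
    have hmem : ∀ x : {x : K // f.eval x = 0}, (x : K) ∈ f.roots.toFinset := by
      intro x
      simp [Multiset.mem_toFinset, mem_roots, hfne, x.2, IsRoot]
    calc Fintype.card {x : K // f.eval x = 0}
        ≤ Fintype.card (f.roots.toFinset : Finset K) :=
          Fintype.card_le_of_injective (fun x => ⟨x, hmem x⟩)
            (fun a b h => Subtype.ext (by simpa using congrArg Subtype.val h))
      _ = f.roots.toFinset.card := Fintype.card_coe _
  calc Nat.card {x : K // f.eval x = 0} ≤ f.roots.toFinset.card := h2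
    _ ≤ Multiset.card f.roots := f.roots.toFinset_card_le
    _ ≤ f.natDegree := f.card_roots'
    _ ≤ q := hdeg

/-- Each fiber of the trace map `y ↦ y + y^q` over the fixed field has exactly `q` points. -/
lemma trace_fiber {K : Type*} [Field K] [Fintype K] (q : ℕ) (hq2 : 2 ≤ q)
    (hK : Fintype.card K = q ^ 2)
    (hadd : ∀ x y : K, (x + y) ^ q = x ^ q + y ^ q)
    (s : K) (hs : s ^ q = s) : Nat.card {y : K // y + y ^ q = s} = q := by
  classical
  set T : K →+ K := AddMonoidHom.mk' (fun y => y + y ^ q)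
    (fun a b => by
      show (a + b) + (a + b) ^ q = (a + a ^ q) + (b + b ^ q)
      rw [hadd]; ring) with hT
  have hTval : ∀ y : K, T y = y + y ^ q := fun y => rfl
  have hfixT : ∀ x : K, (T x) ^ q + (-1) * (T x) = 0 := by
    intro x
    have hx : x ^ (q * q) = x := by
      rw [(by ring : q * q = q ^ 2), ← hK, FiniteField.pow_card]
    rw [hTval, hadd, ← pow_mul, hx]
    ring
  have hker : Nat.card T.ker ≤ q := by
    refine le_trans (le_of_eq (Nat.card_congr
      (Equiv.subtypeEquivRight (q := fun x : K => x ^ q + (1 : K) * x = 0) ?_)))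
      (card_root_le q hq2 1)
    intro x
    rw [AddMonoidHom.mem_ker, hTval]
    constructor <;> intro h <;> linear_combination h
  have hrange : Nat.card T.range ≤ q := by
    refine le_trans (Nat.card_le_card_of_injective
      (fun y : T.range => (⟨(y : K), ?_⟩ : {x : K // x ^ q + (-1) * x = 0}))
      ?_) (card_root_le q hq2 (-1))
    · obtain ⟨y, x, rfl⟩ := y; exact hfixT x
    · intro a b h
      exact Subtype.ext (by simpa using congrArg Subtype.val h)
  have hlag : Nat.card K = Nat.card (K ⧸ T.ker) * Nat.card T.ker :=
    AddSubgroup.card_eq_card_quotient_mul_card_addSubgroup T.ker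
  have hquot : Nat.card (K ⧸ T.ker) = Nat.card T.range :=
    Nat.card_congr (QuotientAddGroup.quotientKerEquivRange T).toEquiv
  have hkq : Nat.card T.ker = q ∧ Nat.card T.range = q := by
    rw [Nat.card_eq_fintype_card, hK, hquot] at hlag
    constructor <;> nlinarith [hker, hrange]
  have hsrange : s ∈ T.range := by
    let f : T.range → {x : K // x ^ q + (-1) * x = 0} :=
      fun y => ⟨(y : K), by obtain ⟨y, x, rfl⟩ := y; exact hfixT x⟩
    have hinj : Function.Injective f := by
      intro a b h
      exact Subtype.ext (by simpa [f] using congrArg Subtype.val h)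
    have hbij : Function.Bijective f := by
      rw [Fintype.bijective_iff_injective_and_card]
      refine ⟨hinj, ?_⟩
      have h1 := Fintype.card_le_of_injective f hinj
      have h2 : Fintype.card {x : K // x ^ q + (-1) * x = 0} ≤ q := by
        rw [← Nat.card_eq_fintype_card]; exact card_root_le q hq2 (-1)
      have h3 : Fintype.card T.range = q := by
        rw [← Nat.card_eq_fintype_card]; exact hkq.2
      omega
    obtain ⟨y, hy⟩ := hbij.2 ⟨s, by rw [hs]; ring⟩
    have : (y : K) = s := congrArg Subtype.val hy
    exact this ▸ y.2
  obtain ⟨y₀, hy₀⟩ := hsrange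
  have heq : Nat.card {y : K // y + y ^ q = s} = Nat.card T.ker := by
    apply Nat.card_congr
    refine ⟨fun y => ⟨(y : K) - y₀, ?_⟩, fun z => ⟨(z : K) + y₀, ?_⟩, ?_, ?_⟩
    · show T ((y : K) - y₀) = 0
      rw [map_sub, hy₀]
      have : T (y : K) = s := by rw [hTval]; exact y.2
      rw [this, sub_self]
    · have hz : T (z : K) = 0 := z.2
      have : T ((z : K) + y₀) = s := by rw [map_add, hy₀, hz, zero_add]
      rw [hTval] at this; exact this
    · intro y; ext; simp
    · intro z; ext; simp
  rw [heq, hkq.1]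

/-- The identification `K³ ≃ K × K × K`. -/
def tripleEquiv (K : Type*) [Field K] : (Fin 3 → K) ≃ K × K × K :=
  ⟨fun v => (v 0, v 1, v 2), fun x => ![x.1, x.2.1, x.2.2],
    fun v => by funext i; fin_cases i <;> rfl, fun x => rfl⟩

/-- Let `q` be a power of an odd prime `p` and `K` a finite field with `q²` elements.
The set of nonzero isotropic vectors for the Hermitian form
`⟨v,w⟩ = −v₁·w₃^q − v₃·w₁^q + v₂·w₂^q` on `K³` has exactly `(q³+1)(q²−1)` elements;
equivalently, the form has exactly `q³ + 1` isotropic lines. -/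
theorem card_isotropic_vectors_and_lines (p q : ℕ) (hp : p.Prime) (hp2 : p ≠ 2)
    (hq : ∃ n : ℕ, 0 < n ∧ q = p ^ n)
    (K : Type*) [Field K] [Fintype K] (hK : Fintype.card K = q ^ 2) :
    Nat.card {v : Fin 3 → K // v ≠ 0 ∧ hermForm q v v = 0} = (q ^ 3 + 1) * (q ^ 2 - 1) ∧
    Nat.card {L : Submodule K (Fin 3 → K) //
        Module.finrank K L = 1 ∧ ∀ v ∈ L, hermForm q v v = 0} = q ^ 3 + 1 := by
  classical
  obtain ⟨n, hn0, hqn⟩ := hq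
  have hp2' : 2 ≤ p := hp.two_le
  have hq2 : 2 ≤ q := by
    rw [hqn]
    calc 2 ≤ p := hp2'
      _ = p ^ 1 := (pow_one p).symm
      _ ≤ p ^ n := Nat.pow_le_pow_right (by omega) hn0
  have hq24 : 4 ≤ q ^ 2 := by calc (4:ℕ) = 2 ^ 2 := rfl
                                _ ≤ q ^ 2 := Nat.pow_le_pow_left hq2 2
  have hq21 : 1 ≤ q ^ 2 := by omega
  -- characteristic
  haveI hchar : CharP K p := by
    obtain ⟨r, hr⟩ := CharP.exists K
    haveI := hr
    obtain ⟨m, hrp, hcard⟩ := FiniteField.card K r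
    rw [hK] at hcard
    have hrq : r = p := by
      have h1 : r ∣ q ^ 2 := hcard ▸ dvd_pow_self r m.pos.ne'
      rw [hqn, ← pow_mul] at h1
      exact (Nat.prime_dvd_prime_iff_eq hrp hp).1 (hrp.dvd_of_dvd_pow h1)
    rwa [hrq] at hr
  haveI : Fact p.Prime := ⟨hp⟩
  have hadd : ∀ x y : K, (x + y) ^ q = x ^ q + y ^ q := by
    intro x y; rw [hqn]; exact add_pow_char_pow x y p n
  have hpow : ∀ x : K, x ^ (q * q) = x := fun x => by
    rw [(by ring : q * q = q ^ 2), ← hK, FiniteField.pow_card]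
  -- the form on triples
  set E : K × K × K → Prop :=
    fun x => -(x.1 * x.2.2 ^ q) - x.2.2 * x.1 ^ q + x.2.1 * x.2.1 ^ q = 0 with hE
  -- counting a-solutions for each fixed (b, c)
  have hcount : ∀ bc : K × K,
      (univ.filter (fun a : K => E (a, bc))).card
        = if bc.2 = 0 then (if bc.1 = 0 then q ^ 2 else 0) else q := by
    rintro ⟨b, c⟩
    by_cases hc : c = 0
    · subst hc
      rw [if_pos rfl]
      by_cases hb : b = 0
      · subst hb
        rw [if_pos rfl, ← hK]
        have : (univ.filter (fun a : K => E (a, 0, 0))) = univ := by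
          apply Finset.filter_true_of_mem
          intro a _
          show -(a * (0:K) ^ q) - 0 * a ^ q + 0 * (0:K) ^ q = 0
          rw [zero_pow (by omega : q ≠ 0)]; ring
        rw [this, Finset.card_univ]
      · rw [if_neg hb, Finset.card_eq_zero]
        apply Finset.filter_false_of_mem
        intro a _ h
        have h' : -(a * (0:K) ^ q) - 0 * a ^ q + b * b ^ q = 0 := h
        rw [zero_pow (by omega : q ≠ 0)] at h'
        have : b * b ^ q = 0 := by linear_combination h'
        rcases mul_eq_zero.1 this with h0 | h0
        · exact hb h0
        · exact hb (pow_eq_zero_iff (by omega : q ≠ 0) |>.1 h0)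
    · rw [if_neg hc]
      have hs : (b * b ^ q) ^ q = b * b ^ q := by
        rw [mul_pow, ← pow_mul, hpow]; ring
      have hfib := trace_fiber q hq2 hK hadd (b * b ^ q) hs
      rw [Nat.card_eq_fintype_card, Fintype.card_subtype] at hfib
      rw [← hfib]
      apply Finset.card_bij (fun a _ => a * c ^ q)
      · intro a ha
        rw [Finset.mem_filter] at ha ⊢
        refine ⟨Finset.mem_univ _, ?_⟩
        have h' : -(a * c ^ q) - c * a ^ q + b * b ^ q = 0 := ha.2
        have hcq : (a * c ^ q) ^ q = c * a ^ q := by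
          rw [mul_pow, ← pow_mul, hpow]; ring
        rw [hcq]
        linear_combination -h'
      · intro a₁ h₁ a₂ h₂ h
        have hcne : c ^ q ≠ 0 := pow_ne_zero _ hc
        exact mul_right_cancel₀ hcne h
      · intro y hy
        rw [Finset.mem_filter] at hy
        refine ⟨y / c ^ q, ?_, ?_⟩
        · rw [Finset.mem_filter]
          refine ⟨Finset.mem_univ _, ?_⟩
          have hcne : c ^ q ≠ 0 := pow_ne_zero _ hc
          have hyv : y / c ^ q * c ^ q = y := div_mul_cancel₀ y hcne
          show -(y / c ^ q * c ^ q) - c * (y / c ^ q) ^ q + b * b ^ q = 0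
          have hcq : (y / c ^ q * c ^ q) ^ q = c * (y / c ^ q) ^ q := by
            rw [mul_pow, ← pow_mul, hpow]; ring
          rw [hyv] at hcq
          rw [hyv, ← hcq]
          linear_combination -hy.2
        · exact div_mul_cancel₀ y (pow_ne_zero _ hc)
  -- total count (including zero)
  have hN0 : (univ.filter E).card = q ^ 2 + q ^ 2 * ((q ^ 2 - 1) * q) := by
    rw [Finset.card_eq_sum_card_fiberwise
      (f := fun x : K × K × K => x.2) (t := univ) (fun x _ => Finset.mem_univ _)]
    have hfib : ∀ bc : K × K,
        ((univ.filter E).filter (fun x => x.2 = bc)).card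
          = (univ.filter (fun a : K => E (a, bc))).card := by
      intro bc
      apply Finset.card_bij (fun x _ => x.1)
      · intro x hx
        rw [Finset.mem_filter] at hx ⊢
        obtain ⟨hx1, hx2⟩ := hx
        rw [Finset.mem_filter] at hx1
        refine ⟨Finset.mem_univ _, ?_⟩
        have : (x.1, bc) = x := by rw [← hx2]
        rw [this]; exact hx1.2
      · intro x₁ h₁ x₂ h₂ h
        rw [Finset.mem_filter] at h₁ h₂
        exact Prod.ext h (h₁.2.trans h₂.2.symm)
      · intro a ha
        rw [Finset.mem_filter] at ha
        refine ⟨(a, bc), ?_, rfl⟩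
        rw [Finset.mem_filter, Finset.mem_filter]
        exact ⟨⟨Finset.mem_univ _, ha.2⟩, rfl⟩
    calc (∑ bc : K × K, ((univ.filter E).filter (fun x => x.2 = bc)).card)
        = ∑ bc : K × K,
            (if bc.2 = 0 then (if bc.1 = 0 then q ^ 2 else 0) else q) := by
          refine Finset.sum_congr rfl (fun bc _ => ?_)
          rw [hfib bc, hcount bc]
      _ = ∑ b : K, ∑ c : K, (if c = 0 then (if b = 0 then q ^ 2 else 0) else q) := by
          rw [Fintype.sum_prod_type]
      _ = ∑ b : K, ((q ^ 2 - 1) * q + (if b = 0 then q ^ 2 else 0)) := by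
          refine Finset.sum_congr rfl (fun b _ => ?_)
          calc ∑ c : K, (if c = 0 then (if b = 0 then q ^ 2 else 0) else q)
              = (∑ c ∈ univ \ {(0:K)}, (if c = 0 then (if b = 0 then q ^ 2 else 0) else q))
                  + (if (0:K) = 0 then (if b = 0 then q ^ 2 else 0) else q) :=
                (Finset.sum_eq_sum_sdiff_singleton_add (Finset.mem_univ (0:K)) _)
            _ = (∑ _c ∈ univ \ {(0:K)}, q) + (if b = 0 then q ^ 2 else 0) := by
                rw [if_pos rfl]
                congr 1
                refine Finset.sum_congr rfl (fun c hc => ?_)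
                rw [Finset.mem_sdiff, Finset.mem_singleton] at hc
                rw [if_neg hc.2]
            _ = (q ^ 2 - 1) * q + (if b = 0 then q ^ 2 else 0) := by
                rw [Finset.sum_const, smul_eq_mul,
                  Finset.card_sdiff_of_subset (Finset.subset_univ _), Finset.card_univ, hK,
                  Finset.card_singleton]
      _ = q ^ 2 + q ^ 2 * ((q ^ 2 - 1) * q) := by
          rw [Finset.sum_add_distrib, Finset.sum_const, Finset.card_univ, hK, smul_eq_mul]
          rw [Finset.sum_ite_eq' univ (0 : K) (fun _ => q ^ 2)]
          simp [add_comm]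
  -- count of nonzero isotropic triples
  have hzeroE : E 0 := by
    show -((0:K) * (0:K) ^ q) - 0 * (0:K) ^ q + 0 * (0:K) ^ q = 0
    ring
  have hfilterE : (univ.filter (fun x : K × K × K => x ≠ 0 ∧ E x))
      = (univ.filter E).erase 0 := by
    ext x
    constructor
    · intro hx
      rw [Finset.mem_filter] at hx
      exact Finset.mem_erase.2 ⟨hx.2.1, Finset.mem_filter.2 ⟨Finset.mem_univ _, hx.2.2⟩⟩
    · intro hx
      rw [Finset.mem_erase] at hx
      exact Finset.mem_filter.2 ⟨Finset.mem_univ _, hx.1, (Finset.mem_filter.1 hx.2).2⟩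
  have hMcard : (univ.filter (fun x : K × K × K => x ≠ 0 ∧ E x)).card
      = q ^ 2 + q ^ 2 * ((q ^ 2 - 1) * q) - 1 := by
    rw [hfilterE, Finset.card_erase_of_mem (by
      rw [Finset.mem_filter]; exact ⟨Finset.mem_univ _, hzeroE⟩), hN0]
  -- transfer to `Fin 3 → K`
  set e : (Fin 3 → K) ≃ K × K × K := tripleEquiv K with he
  have h0iff : ∀ v : Fin 3 → K, v = 0 ↔ e v = 0 := by
    intro v
    constructor
    · rintro rfl
      show ((0:K), (0:K), (0:K)) = 0
      rfl
    · intro h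
      have h0 : v 0 = 0 := congrArg Prod.fst h
      have h1 : v 1 = 0 := congrArg (fun x : K × K × K => x.2.1) h
      have h2 : v 2 = 0 := congrArg (fun x : K × K × K => x.2.2) h
      funext i
      fin_cases i
      · exact h0
      · exact h1
      · exact h2
  have hveq : Nat.card {v : Fin 3 → K // v ≠ 0 ∧ hermForm q v v = 0}
      = (univ.filter (fun x : K × K × K => x ≠ 0 ∧ E x)).card := by
    rw [← Fintype.card_subtype, Nat.card_eq_fintype_card]
    apply Fintype.card_congr
    apply Equiv.subtypeEquiv e
    intro v
    exact and_congr (not_congr (h0iff v)) Iff.rfl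
  have hpart1 : Nat.card {v : Fin 3 → K // v ≠ 0 ∧ hermForm q v v = 0}
      = (q ^ 3 + 1) * (q ^ 2 - 1) := by
    rw [hveq, hMcard]
    have h2 : 1 ≤ q ^ 2 + q ^ 2 * ((q ^ 2 - 1) * q) := by omega
    zify [hq21, h2]
    ring
  refine ⟨hpart1, ?_⟩
  -- Part 2: counting isotropic lines
  haveI : Finite (Submodule K (Fin 3 → K)) :=
    Finite.of_injective _ SetLike.coe_injective
  haveI := Fintype.ofFinite (Submodule K (Fin 3 → K))
  set P : (Fin 3 → K) → Prop := fun v => v ≠ 0 ∧ hermForm q v v = 0 with hP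
  set Q : Submodule K (Fin 3 → K) → Prop :=
    fun L => Module.finrank K L = 1 ∧ ∀ v ∈ L, hermForm q v v = 0 with hQ
  -- scaling invariance
  have hscale : ∀ (a : K) (v : Fin 3 → K), hermForm q v v = 0 →
      hermForm q (a • v) (a • v) = 0 := by
    intro a v h
    show -((a • v) 0 * ((a • v) 2) ^ q) - (a • v) 2 * ((a • v) 0) ^ q
        + (a • v) 1 * ((a • v) 1) ^ q = 0
    simp only [Pi.smul_apply, smul_eq_mul, mul_pow]
    have h' : -(v 0 * (v 2) ^ q) - v 2 * (v 0) ^ q + v 1 * (v 1) ^ q = 0 := h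
    linear_combination (a * a ^ q) * h'
  have hg : ∀ v : {v : Fin 3 → K // P v}, Q (Submodule.span K {v.1}) := by
    rintro ⟨v, hv0, hviso⟩
    refine ⟨finrank_span_singleton hv0, ?_⟩
    intro w hw
    rw [Submodule.mem_span_singleton] at hw
    obtain ⟨a, rfl⟩ := hw
    exact hscale a v hviso
  set g : {v : Fin 3 → K // P v} → {L : Submodule K (Fin 3 → K) // Q L} :=
    fun v => ⟨Submodule.span K {v.1}, hg v⟩ with hgdef
  -- fibers of g
  have hfiber : ∀ L : {L : Submodule K (Fin 3 → K) // Q L},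
      Fintype.card {v : {v : Fin 3 → K // P v} // g v = L} = q ^ 2 - 1 := by
    rintro ⟨L, hL1, hL2⟩
    have hcardL : Fintype.card L = q ^ 2 := by
      rw [Module.card_eq_pow_finrank (K := K) (V := L), hK, hL1, pow_one]
    have hcardLne : Fintype.card {w : L // w ≠ 0} = q ^ 2 - 1 := by
      have hc : Fintype.card {w : L // ¬ (w = 0)}
          = Fintype.card L - Fintype.card {w : L // w = 0} :=
        Fintype.card_subtype_compl _
      rw [Fintype.card_subtype_eq (0 : L), hcardL] at hc
      exact hc
    rw [← hcardLne]
    apply Fintype.card_congr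
    refine ⟨fun x => ⟨⟨x.1.1, ?_⟩, ?_⟩, fun w => ⟨⟨w.1.1, ?_, hL2 w.1.1 w.1.2⟩, ?_⟩, ?_, ?_⟩
    · -- x.1.1 ∈ L
      have hsp : Submodule.span K {x.1.1} = L := congrArg Subtype.val x.2
      have hm := Submodule.mem_span_singleton_self (R := K) (x.1.1 : Fin 3 → K)
      rwa [hsp] at hm
    · -- nonzero in L
      intro h
      exact x.1.2.1 (congrArg Subtype.val h)
    · -- w.1.1 ≠ 0
      intro h
      exact w.2 (Subtype.ext h)
    · -- span = L
      apply Subtype.ext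
      show Submodule.span K {w.1.1} = L
      have hle : Submodule.span K {(w.1 : Fin 3 → K)} ≤ L := by
        rw [Submodule.span_le, Set.singleton_subset_iff]
        exact w.1.2
      refine Submodule.eq_of_le_of_finrank_eq hle ?_
      rw [hL1, finrank_span_singleton (fun h => w.2 (Subtype.ext h))]
    · intro x; rfl
    · intro w; rfl
  -- put the pieces together
  have hsum : Nat.card {v : Fin 3 → K // P v}
      = Nat.card {L : Submodule K (Fin 3 → K) // Q L} * (q ^ 2 - 1) := by
    rw [Nat.card_eq_fintype_card, Nat.card_eq_fintype_card]
    rw [← Fintype.card_congr (Equiv.sigmaFiberEquiv g)]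
    rw [Fintype.card_sigma]
    rw [Finset.sum_congr rfl (fun L _ => hfiber L)]
    rw [Finset.sum_const, Finset.card_univ, smul_eq_mul]
  have hpos : 0 < q ^ 2 - 1 := by omega
  exact Nat.eq_of_mul_eq_mul_right hpos (by rw [← hsum, hpart1])
end

section
/- Let F = ℚ(u) be the field of rational functions in one variable u over ℚ, and let V be the F-vector space with basis (L₁, L₂, L′). Let T : V → V be the F-linear operator with T L₁ = L₂ + L′, T L₂ = L₁ + L′, and T L′ = (u²−1)(L₁+L₂) + (u²−2)L′. Then (T + 1)(T − u²) = 0; the u²-eigenspace of T is the one-dimensional subspace spanned by L₁ + L₂ + L′; and the (−1)-eigenspace of T is the two-dimensional subspace spanned by (u²−1)L₁ − L′ and (u²−1)L₂ − L′. -/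
noncomputable def u : RatFunc ℚ := RatFunc.X

lemma u_sq_sub_one_ne_zero : (u ^ 2 - 1 : RatFunc ℚ) ≠ 0 := by
  have h : (u ^ 2 - 1 : RatFunc ℚ) = algebraMap (Polynomial ℚ) _ (Polynomial.X ^ 2 - 1) := by
    simp [u, RatFunc.algebraMap_X]
  rw [h]
  apply RatFunc.algebraMap_ne_zero
  intro h2
  have := congrArg (Polynomial.eval 0) h2
  simp at this

lemma u_sq_add_one_ne_zero : (u ^ 2 + 1 : RatFunc ℚ) ≠ 0 := by
  have h : (u ^ 2 + 1 : RatFunc ℚ) = algebraMap (Polynomial ℚ) _ (Polynomial.X ^ 2 + 1) := by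
    simp [u, RatFunc.algebraMap_X]
  rw [h]
  apply RatFunc.algebraMap_ne_zero
  intro h2
  have := congrArg (Polynomial.eval 0) h2
  simp at this

set_option maxHeartbeats 1600000 in
/-- Formulas (7.6)(e′) and (7.6)(f′) of Lusztig–Vogan: on the `ℚ(u)`-vector space with
basis `(L₁, L₂, L′)`, the operator with `T L₁ = L₂ + L′`, `T L₂ = L₁ + L′`,
`T L′ = (u²−1)(L₁+L₂) + (u²−2)L′` satisfies `(T+1)(T−u²) = 0`, its `u²`-eigenspace is
the one-dimensional span of `L₁+L₂+L′`, and its `(−1)`-eigenspace is the two-dimensional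
span of `(u²−1)L₁ − L′` and `(u²−1)L₂ − L′`. -/
theorem hecke_type_two_imaginary_I_I (V : Type*) [AddCommGroup V]
    [Module (RatFunc ℚ) V] (b : Module.Basis (Fin 3) (RatFunc ℚ) V)
    (T : V →ₗ[RatFunc ℚ] V)
    (h1 : T (b 0) = b 1 + b 2)
    (h2 : T (b 1) = b 0 + b 2)
    (h3 : T (b 2) = (u ^ 2 - 1) • (b 0 + b 1) + (u ^ 2 - 2) • b 2) :
    (T + LinearMap.id) ∘ₗ (T - u ^ 2 • LinearMap.id) = 0 ∧
    Module.End.eigenspace T (u ^ 2) = Submodule.span (RatFunc ℚ) {b 0 + b 1 + b 2} ∧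
    Module.finrank (RatFunc ℚ) (Module.End.eigenspace T (u ^ 2)) = 1 ∧
    Module.End.eigenspace T (-1) =
      Submodule.span (RatFunc ℚ) {(u ^ 2 - 1) • b 0 - b 2, (u ^ 2 - 1) • b 1 - b 2} ∧
    Module.finrank (RatFunc ℚ) (Module.End.eigenspace T (-1)) = 2 := by
  have hXm := u_sq_sub_one_ne_zero
  have hXp := u_sq_add_one_ne_zero
  have key : ∀ x : V, x = b.repr x 0 • b 0 + b.repr x 1 • b 1 + b.repr x 2 • b 2 := fun x => by
    have hs := (b.sum_repr x).symm; rw [Fin.sum_univ_three] at hs; exact hs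
  have hT : ∀ x : V, T x = (b.repr x 1 + (u ^ 2 - 1) * b.repr x 2) • b 0
      + (b.repr x 0 + (u ^ 2 - 1) * b.repr x 2) • b 1
      + (b.repr x 0 + b.repr x 1 + (u ^ 2 - 2) * b.repr x 2) • b 2 := by
    intro x
    conv_lhs => rw [key x]
    simp only [map_add, map_smul, h1, h2, h3, smul_add]
    simp only [smul_smul, add_smul]
    ring_nf
    abel
  have inj : ∀ c0 c1 c2 d0 d1 d2 : RatFunc ℚ,
      c0 • b 0 + c1 • b 1 + c2 • b 2 = d0 • b 0 + d1 • b 1 + d2 • b 2 →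
      c0 = d0 ∧ c1 = d1 ∧ c2 = d2 := by
    intro c0 c1 c2 d0 d1 d2 h
    have e0 := congrArg (fun y => b.repr y 0) h
    have e1 := congrArg (fun y => b.repr y 1) h
    have e2 := congrArg (fun y => b.repr y 2) h
    simp [Finsupp.single_apply] at e0 e1 e2
    exact ⟨e0, e1, e2⟩
    -- may need adjusting
  have E1 : Module.End.eigenspace T (u ^ 2) = Submodule.span (RatFunc ℚ) {b 0 + b 1 + b 2} := by
    apply le_antisymm
    · intro x hx
      rw [Module.End.mem_eigenspace_iff] at hx
      have hx' : (b.repr x 1 + (u ^ 2 - 1) * b.repr x 2) • b 0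
          + (b.repr x 0 + (u ^ 2 - 1) * b.repr x 2) • b 1
          + (b.repr x 0 + b.repr x 1 + (u ^ 2 - 2) * b.repr x 2) • b 2
          = (u ^ 2 * b.repr x 0) • b 0 + (u ^ 2 * b.repr x 1) • b 1
            + (u ^ 2 * b.repr x 2) • b 2 := by
        rw [← hT x, hx]
        conv_lhs => rw [key x]
        rw [smul_add, smul_add, smul_smul, smul_smul, smul_smul]
      obtain ⟨e0, e1, e2⟩ := inj _ _ _ _ _ _ hx'
      have h01 : b.repr x 0 = b.repr x 1 := by
        rcases mul_eq_zero.mp (show (u ^ 2 + 1) * (b.repr x 0 - b.repr x 1) = 0 by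
          linear_combination e1 - e0) with h | h
        · exact absurd h hXp
        · exact sub_eq_zero.mp h
      have h20 : b.repr x 2 = b.repr x 0 := by
        rcases mul_eq_zero.mp (show (u ^ 2 - 1) * (b.repr x 2 - b.repr x 0) = 0 by
          linear_combination e0 + h01) with h | h
        · exact absurd h hXm
        · exact sub_eq_zero.mp h
      rw [Submodule.mem_span_singleton]
      refine ⟨b.repr x 0, ?_⟩
      conv_rhs => rw [key x]
      rw [← h01, h20, smul_add, smul_add]
    · rw [Submodule.span_le, Set.singleton_subset_iff, SetLike.mem_coe,
        Module.End.mem_eigenspace_iff]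
      simp only [map_add, h1, h2, h3]
      apply b.repr.injective
      ext j
      fin_cases j <;> simp [Finsupp.single_apply] <;> ring
  have E2 : Module.End.eigenspace T (-1) =
      Submodule.span (RatFunc ℚ) {(u ^ 2 - 1) • b 0 - b 2, (u ^ 2 - 1) • b 1 - b 2} := by
    apply le_antisymm
    · intro x hx
      rw [Module.End.mem_eigenspace_iff] at hx
      have hx' : (b.repr x 1 + (u ^ 2 - 1) * b.repr x 2) • b 0
          + (b.repr x 0 + (u ^ 2 - 1) * b.repr x 2) • b 1
          + (b.repr x 0 + b.repr x 1 + (u ^ 2 - 2) * b.repr x 2) • b 2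
          = ((-1 : RatFunc ℚ) * b.repr x 0) • b 0 + ((-1 : RatFunc ℚ) * b.repr x 1) • b 1
            + ((-1 : RatFunc ℚ) * b.repr x 2) • b 2 := by
        rw [← hT x, hx]
        conv_lhs => rw [key x]
        rw [smul_add, smul_add, smul_smul, smul_smul, smul_smul]
      obtain ⟨e0, e1, e2⟩ := inj _ _ _ _ _ _ hx'
      have rel : b.repr x 0 + b.repr x 1 + (u ^ 2 - 1) * b.repr x 2 = 0 := by
        linear_combination e2
      rw [Submodule.mem_span_pair]
      refine ⟨b.repr x 0 / (u ^ 2 - 1), b.repr x 1 / (u ^ 2 - 1), ?_⟩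
      conv_rhs => rw [key x]
      apply b.repr.injective
      ext j
      fin_cases j
      · simp [Finsupp.single_apply]
        field_simp
      · simp [Finsupp.single_apply]
        field_simp
      · simp [Finsupp.single_apply]
        field_simp
        linear_combination (-1 : RatFunc ℚ) * rel
    · rw [Submodule.span_le]
      refine Set.insert_subset_iff.mpr ⟨?_, Set.singleton_subset_iff.mpr ?_⟩ <;>
      · rw [SetLike.mem_coe, Module.End.mem_eigenspace_iff]
        simp only [map_sub, map_smul, map_add, h1, h2, h3]
        apply b.repr.injective
        ext j
        fin_cases j <;> simp [Finsupp.single_apply] <;> ring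
  refine ⟨?_, ?_, ?_, ?_, ?_⟩
  · -- (T+1)(T-u²) = 0
    have z : ∀ i : Fin 3, ((T + LinearMap.id) ∘ₗ (T - u ^ 2 • LinearMap.id)) (b i)
        = (0 : V →ₗ[RatFunc ℚ] V) (b i) := by
      intro i
      have hi : b i = b 0 ∨ b i = b 1 ∨ b i = b 2 := by
        fin_cases i
        · exact Or.inl rfl
        · exact Or.inr (Or.inl rfl)
        · exact Or.inr (Or.inr rfl)
      rcases hi with hi | hi | hi <;> rw [hi] <;>
      · simp only [LinearMap.comp_apply, LinearMap.sub_apply, LinearMap.smul_apply,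
          LinearMap.id_apply, LinearMap.add_apply, LinearMap.zero_apply, map_sub, map_smul,
          map_add, h1, h2, h3]
        apply b.repr.injective
        ext j
        fin_cases j <;> simp [Finsupp.single_apply] <;> ring
    exact b.ext z
  · exact E1
  · rw [E1]
    have hv : (b 0 + b 1 + b 2 : V) ≠ 0 := by
      intro h
      have := congrArg (fun y => b.repr y 0) h
      simp [Finsupp.single_apply] at this
    exact finrank_span_singleton hv
  · exact E2
  · rw [E2]
    have hli : LinearIndependent (RatFunc ℚ)
        ![(u ^ 2 - 1) • b 0 - b 2, (u ^ 2 - 1) • b 1 - b 2] := by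
      rw [LinearIndependent.pair_iff]
      intro s t hst
      have e0 := congrArg (fun y => b.repr y 0) hst
      have e1 := congrArg (fun y => b.repr y 1) hst
      simp [Finsupp.single_apply] at e0 e1
      exact ⟨e0.resolve_right hXm, e1.resolve_right hXm⟩
    have hrange : Set.range ![(u ^ 2 - 1) • b 0 - b 2, (u ^ 2 - 1) • b 1 - b 2]
        = {(u ^ 2 - 1) • b 0 - b 2, (u ^ 2 - 1) • b 1 - b 2} := by
      ext z
      simp [Fin.exists_fin_two, eq_comm]
      tauto
    rw [← hrange, finrank_span_eq_card hli]
    simp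
end
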